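/- The set E_8 of exceptional classes is finite; that is, there are only finitely many pairs (d, m) ∈ ℤ × (Fin 8 → ℤ) satisfying d² − ∑_{i} m_i² = −1 and 3d − ∑_{i} m_i = 1. -/
import Mathlib


/-- The exceptional classes in the lattice `ℤ × (Fin 8 → ℤ)` modelling the
Picard group of the Del Pezzo surface `S₈`: classes `ξ = (d, m)` with
`ξ·ξ = -1` and `ξ·K = -1`, i.e. `d² - ∑ mᵢ² = -1` and `3d - ∑ mᵢ = 1`. -/
def E8 : Set (ℤ × (Fin 8 → ℤ)) :=
  {p | p.1 ^ 2 - ∑ i, (p.2 i) ^ 2 = -1 ∧ 3 * p.1 - ∑ i, p.2 i = 1}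

/-- the set of exceptional classes `E₈` is finite. -/
theorem E8_finite : E8.Finite := by
  apply Set.Finite.subset (((Set.finite_Icc (-1 : ℤ) 7).prod
    (Set.Finite.pi fun _ : Fin 8 => Set.finite_Icc (-8 : ℤ) 8)))
  rintro ⟨d, m⟩ ⟨h1, h2⟩
  simp only [Set.mem_setOf_eq] at h1 h2
  have hq : ∑ i, (m i) ^ 2 = d ^ 2 + 1 := by linarith
  have hs : ∑ i, m i = 3 * d - 1 := by linarith
  have hcs : (∑ i, m i) ^ 2 ≤ 8 * ∑ i, (m i) ^ 2 := by
    have := sq_sum_le_card_mul_sum_sq (s := (Finset.univ : Finset (Fin 8))) (f := m)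
    simpa using this
  have hd : -1 ≤ d ∧ d ≤ 7 := by constructor <;> nlinarith
  have hm : ∀ i, (m i) ^ 2 ≤ 50 := by
    intro i
    have : (m i) ^ 2 ≤ ∑ j, (m j) ^ 2 :=
      Finset.single_le_sum (fun j _ => sq_nonneg (m j)) (Finset.mem_univ i)
    nlinarith [hd.1, hd.2]
  refine ⟨Set.mem_Icc.2 hd, fun i _ => Set.mem_Icc.2 ⟨?_, ?_⟩⟩ <;>
    (have := hm i; nlinarith)
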